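/- Let z, r : ℝ → ℝ be differentiable functions satisfying, for all t, the reduced system z' = mμ + β(z−cr)(1−z) − (γ+τ1+τ2+μ)z + τ1 r and r' = r((1−c)β(1−z) − (γ+τ2+μ)). Define s := z − r and x := 1 − z. Then s(t)+r(t)+x(t) = 1 for all t, and (s, r, x) satisfies the Lipsitch ODE system at every t. -/
import Mathlib

/-- If differentiable `z, r : ℝ → ℝ` satisfy the reduced system
`z' = mμ + β(z − c r)(1 − z) − (γ+τ1+τ2+μ) z + τ1 r` and
`r' = r((1−c)β(1−z) − (γ+τ2+μ))` for all `t`, then setting `s := z − r` and `x := 1 − z`,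
one has `s + r + x = 1` everywhere and `(s, r, x)` satisfies the Lipsitch ODE system at
every time. -/
theorem lipsitch_of_reduced_system
    (β μ γ τ1 τ2 m c : ℝ)
    (hβ : 0 < β) (hμ : 0 < μ) (hγ : 0 < γ) (hτ1 : 0 < τ1) (hτ2 : 0 < τ2)
    (hm : m ∈ Set.Ioo (0:ℝ) 1) (hc : c ∈ Set.Ioo (0:ℝ) 1)
    (z r : ℝ → ℝ)
    (hz : Differentiable ℝ z) (hr : Differentiable ℝ r)
    (hzsys : ∀ t : ℝ,
      deriv z t = m * μ + β * (z t - c * r t) * (1 - z t) - (γ + τ1 + τ2 + μ) * z t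
        + τ1 * r t)
    (hrsys : ∀ t : ℝ,
      deriv r t = r t * ((1 - c) * β * (1 - z t) - (γ + τ2 + μ))) :
    ∀ t : ℝ,
      (fun u => z u - r u) t + r t + (fun u => 1 - z u) t = 1 ∧
      deriv (fun u => z u - r u) t
        = m * μ + β * ((fun u => z u - r u) t) * ((fun u => 1 - z u) t)
            / ((fun u => z u - r u) t + r t + (fun u => 1 - z u) t)
          - (γ + τ1 + τ2 + μ) * ((fun u => z u - r u) t) ∧
      deriv r t
        = (1 - c) * β * r t * ((fun u => 1 - z u) t)
            / ((fun u => z u - r u) t + r t + (fun u => 1 - z u) t)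
          - (γ + τ2 + μ) * r t ∧
      deriv (fun u => 1 - z u) t
        = (1 - m) * μ + (γ + τ1 + τ2) * ((fun u => z u - r u) t) + (γ + τ2) * r t
          - β * ((fun u => z u - r u) t) * ((fun u => 1 - z u) t)
            / ((fun u => z u - r u) t + r t + (fun u => 1 - z u) t)
          - (1 - c) * β * r t * ((fun u => 1 - z u) t)
            / ((fun u => z u - r u) t + r t + (fun u => 1 - z u) t)
          - μ * ((fun u => 1 - z u) t) := by
  intro t
  have hsum : (fun u => z u - r u) t + r t + (fun u => 1 - z u) t = 1 := by
    ring
  have hds : deriv (fun u => z u - r u) t = deriv z t - deriv r t := by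
    exact deriv_sub (hz t) (hr t)
  have hdx : deriv (fun u => 1 - z u) t = -deriv z t := by
    have : deriv (fun u => (1:ℝ) - z u) t = deriv (fun _ => (1:ℝ)) t - deriv z t :=
      deriv_sub (differentiable_const 1 t) (hz t)
    simpa using this
  refine ⟨hsum, ?_, ?_, ?_⟩
  · rw [hsum, hds, hzsys t, hrsys t]; simp; ring
  · rw [hsum, hrsys t]; simp; ring
  · rw [hsum, hdx, hzsys t]; simp; ring
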